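/- Fix ħ ∈ ℂ with ħ ≠ 0 and z ∈ ℂ. Let β : ℂ → ℂ be real-differentiable at z and P : ℂ → ℂ any function, and define M(w) = [[1, ħ·β(w)], [0, 1]] and A₁(w) = ħ⁻¹·[[0, P(w)], [1, 0]] − β(w)·diag(1, −1). Then: (a) M(z)·A₁(z)·M(z)⁻¹ − (∂_z M(z))·M(z)⁻¹ = ħ⁻¹·[[0, P(z)], [1, 0]] + ħ·(β(z)² − ∂_z β(z))·[[0,1],[0,0]]; and (b) if λ : ℂ → ℝ satisfies ∂_z̄ β(z) = λ(z)², then with A₂(w) = ħ·[[0, λ(w)²], [0, 0]] one has M(z)·A₂(z)·M(z)⁻¹ − (∂_z̄ M(z))·M(z)⁻¹ = 0. (This is the gauge transformation taking the R → 0 limiting connection of the SL(2,ℂ) Hitchin family to the standard oper form.) -/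

import Mathlib

open Matrix Complex

attribute [local instance] Matrix.normedAddCommGroup Matrix.normedSpace

/-- The Wirtinger derivative `∂_z F(z) = ½(DF(z)(1) - i·DF(z)(i))`, where `DF(z)` is the
real Fréchet derivative. -/
noncomputable def dz {E : Type*} [NormedAddCommGroup E] [NormedSpace ℂ E]
    (F : ℂ → E) (z : ℂ) : E :=
  (2⁻¹ : ℂ) • (fderiv ℝ F z 1 - Complex.I • fderiv ℝ F z Complex.I)

/-- The Wirtinger derivative `∂_z̄ F(z) = ½(DF(z)(1) + i·DF(z)(i))`. -/
noncomputable def dzbar {E : Type*} [NormedAddCommGroup E] [NormedSpace ℂ E]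
    (F : ℂ → E) (z : ℂ) : E :=
  (2⁻¹ : ℂ) • (fderiv ℝ F z 1 + Complex.I • fderiv ℝ F z Complex.I)

/-- The gauge transformation `M = [[1, ħβ],[0,1]]` takes the `R → 0` limiting connection
of the SL(2,ℂ) Hitchin family to the standard oper form:
(a) `M A₁ M⁻¹ - (∂_z M) M⁻¹ = ħ⁻¹[[0,P],[1,0]] + ħ(β² - ∂_z β)[[0,1],[0,0]]`, and
(b) if `∂_z̄ β(z) = λ(z)²` then with `A₂ = ħ[[0,λ²],[0,0]]` one has
`M A₂ M⁻¹ - (∂_z̄ M) M⁻¹ = 0`. -/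
theorem gauge_to_oper_form (hbar : ℂ) (hh : hbar ≠ 0) (z : ℂ)
    (β : ℂ → ℂ) (hβ : DifferentiableAt ℝ β z) (P : ℂ → ℂ)
    (M : ℂ → Matrix (Fin 2) (Fin 2) ℂ)
    (hM : M = fun w => (!![1, hbar * β w; 0, 1] : Matrix (Fin 2) (Fin 2) ℂ))
    (A₁ : ℂ → Matrix (Fin 2) (Fin 2) ℂ)
    (hA₁ : A₁ = fun w => hbar⁻¹ • (!![0, P w; 1, 0] : Matrix (Fin 2) (Fin 2) ℂ)
      - β w • (!![1, 0; 0, -1] : Matrix (Fin 2) (Fin 2) ℂ)) :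
    (M z * A₁ z * (M z)⁻¹ - dz M z * (M z)⁻¹
        = hbar⁻¹ • (!![0, P z; 1, 0] : Matrix (Fin 2) (Fin 2) ℂ)
          + (hbar * ((β z) ^ 2 - dz β z)) •
            (!![0, 1; 0, 0] : Matrix (Fin 2) (Fin 2) ℂ)) ∧
    (∀ lam : ℂ → ℝ, dzbar β z = ((lam z : ℂ)) ^ 2 →
      ∀ A₂ : ℂ → Matrix (Fin 2) (Fin 2) ℂ,
        A₂ = (fun w => hbar • (!![0, ((lam w : ℂ)) ^ 2; 0, 0] :
          Matrix (Fin 2) (Fin 2) ℂ)) →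
        M z * A₂ z * (M z)⁻¹ - dzbar M z * (M z)⁻¹ = 0) := by
  have hMeq : M = fun w => (!![1, 0; 0, 1] : Matrix (Fin 2) (Fin 2) ℂ)
      + (hbar * β w) • (!![0, 1; 0, 0] : Matrix (Fin 2) (Fin 2) ℂ) := by
    funext w
    rw [hM]
    ext i j
    fin_cases i <;> fin_cases j <;> simp
  have hc : DifferentiableAt ℝ (fun w => hbar * β w) z := hβ.const_mul _
  have hfd : fderiv ℝ M z = (fderiv ℝ (fun w => hbar * β w) z).smulRight
      (!![0, 1; 0, 0] : Matrix (Fin 2) (Fin 2) ℂ) := by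
    rw [hMeq]
    exact ((hc.hasFDerivAt.smul_const (!![0, 1; 0, 0] : Matrix (Fin 2) (Fin 2) ℂ)).const_add _).fderiv
  have hcm : fderiv ℝ (fun w => hbar * β w) z = hbar • fderiv ℝ β z :=
    fderiv_const_mul hβ hbar
  have hdzM : dz M z = (hbar * dz β z) • (!![0, 1; 0, 0] : Matrix (Fin 2) (Fin 2) ℂ) := by
    unfold dz
    erw [hfd, ContinuousLinearMap.smulRight_apply, ContinuousLinearMap.smulRight_apply]
    ext i j
    fin_cases i <;> fin_cases j <;>
      simp [dz, hfd, hcm, Matrix.smul_apply] <;> ring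
  have hdzbarM : dzbar M z = (hbar * dzbar β z) •
      (!![0, 1; 0, 0] : Matrix (Fin 2) (Fin 2) ℂ) := by
    unfold dzbar
    erw [hfd, ContinuousLinearMap.smulRight_apply, ContinuousLinearMap.smulRight_apply]
    ext i j
    fin_cases i <;> fin_cases j <;>
      simp [dzbar, hfd, hcm, Matrix.smul_apply] <;> ring
  have hMinv : (M z)⁻¹ = (!![1, -(hbar * β z); 0, 1] : Matrix (Fin 2) (Fin 2) ℂ) := by
    apply inv_eq_right_inv
    rw [hM]
    ext i j
    fin_cases i <;> fin_cases j <;>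
      simp [Matrix.mul_apply, Fin.sum_univ_two] <;> ring
  constructor
  · rw [hdzM, hMinv, hM, hA₁]
    ext i j
    fin_cases i <;> fin_cases j <;>
        simp [Matrix.mul_apply, Fin.sum_univ_two,
          Matrix.smul_apply, Matrix.sub_apply, Matrix.add_apply] <;>
        field_simp <;> ring
  · intro lam hlam A₂ hA₂
    rw [hdzbarM, hMinv, hM, hA₂, hlam]
    ext i j
    fin_cases i <;> fin_cases j <;>
        simp [Matrix.mul_apply, Fin.sum_univ_two,
          Matrix.smul_apply, Matrix.sub_apply] <;> ring
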